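/- Let V be a finite set, let c : V × V → ℝ≥0 satisfy the triangle inequality c(x,z) ≤ c(x,y) + c(y,z) for all x,y,z ∈ V, let k ≥ 1, let D ≥ 0, and let H ⊆ V be a set with c(x,y) ≤ D for all x,y ∈ H. Let W_main = w_1,…,w_t be a walk on V, let W_sub = w_{s+1},…,w_{s+k} be a subwalk of W_main consisting of k consecutive visits (0 ≤ s ≤ t−k) with {w_{s+1},…,w_{s+k}} ⊆ H, and let Q = q_1,…,q_m be a walk all of whose vertices lie in H. Let W'_main := w_1,…,w_s, q_1,…,q_m, w_{s+1},…,w_t be the walk obtained from W_main by inserting Q right before the start of W_sub. Then c^{(k)}(W'_main) ≤ c^{(k)}(W_main) + c^{(k)}(Q) + 2k²D. -/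

import Mathlib

noncomputable section

/-- The `k`-hop cost of a (non-closed) walk `w_1, …, w_t` (repeated vertices allowed):
`∑_{Δ=1}^{k} ∑_{i=1}^{t-Δ} c(w_i, w_{i+Δ})`. -/
def walkHopCost {V : Type*} (c : V → V → ℝ) (k : ℕ) (l : List V) : ℝ :=
  ∑ Δ ∈ Finset.Icc 1 k, (List.zipWith c l (l.drop Δ)).sum

namespace S17

def P (k n : ℕ) : Finset (ℕ × ℕ) :=
  (Finset.range n ×ˢ Finset.range n).filter fun p => p.1 < p.2 ∧ p.2 ≤ p.1 + k

lemma mem_P {k n : ℕ} {p : ℕ × ℕ} :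
    p ∈ P k n ↔ p.1 < p.2 ∧ p.2 ≤ p.1 + k ∧ p.2 < n := by
  simp only [P, Finset.mem_filter, Finset.mem_product, Finset.mem_range]
  omega

lemma sum_zipWith {V : Type*} (f : V → V → ℝ) (d : V) :
    ∀ l₁ l₂ : List V,
      (List.zipWith f l₁ l₂).sum =
        ∑ i ∈ Finset.range (min l₁.length l₂.length), f (l₁.getD i d) (l₂.getD i d)
  | [], l₂ => by simp
  | x :: l₁, [] => by simp
  | x :: l₁, y :: l₂ => by
    rw [List.zipWith_cons_cons, List.sum_cons, sum_zipWith f d l₁ l₂]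
    have h : min (x :: l₁).length (y :: l₂).length = (min l₁.length l₂.length) + 1 := by
      simp [Nat.succ_min_succ]
    rw [h, Finset.sum_range_succ']
    simp [List.getD_cons_succ, List.getD_cons_zero]
    ring

lemma walkHopCost_eq {V : Type*} (c : V → V → ℝ) (k : ℕ) (d : V) (l : List V) :
    walkHopCost c k l = ∑ p ∈ P k l.length, c (l.getD p.1 d) (l.getD p.2 d) := by
  unfold walkHopCost
  have h1 : ∀ Δ : ℕ, (List.zipWith c l (l.drop Δ)).sum =
      ∑ i ∈ Finset.range (l.length - Δ), c (l.getD i d) (l.getD (i + Δ) d) := by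
    intro Δ
    rw [sum_zipWith c d]
    have hm : min l.length (l.drop Δ).length = l.length - Δ := by
      rw [List.length_drop]; omega
    rw [hm]
    refine Finset.sum_congr rfl fun i hi => ?_
    congr 1
    rw [List.getD_eq_getElem?_getD, List.getD_eq_getElem?_getD, List.getElem?_drop, Nat.add_comm]
  simp only [h1]
  rw [Finset.sum_sigma']
  refine Finset.sum_nbij' (fun q => (q.2, q.2 + q.1)) (fun p => ⟨p.2 - p.1, p.1⟩) ?_ ?_ ?_ ?_ ?_
  · intro a ha
    simp only [Finset.mem_sigma, Finset.mem_Icc, Finset.mem_range] at ha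
    simp only [mem_P]
    omega
  · intro a ha
    simp only [mem_P] at ha
    simp only [Finset.mem_sigma, Finset.mem_Icc, Finset.mem_range]
    omega
  · rintro ⟨Δ, i⟩ ha
    simp only [Finset.mem_sigma, Finset.mem_Icc, Finset.mem_range] at ha
    dsimp only
    have h2 : i + Δ - i = Δ := by omega
    simp [h2]
  · rintro ⟨i, j⟩ ha
    simp only [mem_P] at ha
    dsimp only
    have h2 : i + (j - i) = j := by omega
    simp [h2]
  · intro a ha
    rfl

end S17

open S17 in
theorem statement17 {V : Type*}
    (c : V → V → ℝ) (k : ℕ) (hk : 1 ≤ k)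
    (D : ℝ) (hD : 0 ≤ D)
    (hc0 : ∀ x y, 0 ≤ c x y)
    (htri : ∀ x y z, c x z ≤ c x y + c y z)
    (H : Set V) (hH : ∀ x ∈ H, ∀ y ∈ H, c x y ≤ D)
    (Wmain : List V) (s : ℕ) (hs : s + k ≤ Wmain.length)
    (hsub : ∀ v ∈ (Wmain.drop s).take k, v ∈ H)
    (Q : List V) (hQ : ∀ v ∈ Q, v ∈ H) :
    walkHopCost c k (Wmain.take s ++ Q ++ Wmain.drop s) ≤
      walkHopCost c k Wmain + walkHopCost c k Q + 2 * k ^ 2 * D := by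
  have hst : s ≤ Wmain.length := by omega
  have h0 : 0 < Wmain.length := by omega
  have v₀ : V := Wmain[0]'h0
  set W' := Wmain.take s ++ Q ++ Wmain.drop s with hW'
  have hlen : W'.length = Wmain.length + Q.length := by
    rw [hW']
    simp only [List.length_append, List.length_take, List.length_drop]
    omega
  -- getD facts on the new walk
  have hgA : ∀ i, i < s → W'.getD i v₀ = Wmain.getD i v₀ := by
    intro i hi
    rw [hW', List.getD_eq_getElem?_getD, List.getD_eq_getElem?_getD, List.append_assoc,
      List.getElem?_append, List.length_take,
      if_pos (show i < min s Wmain.length by omega),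
      List.getElem?_take, if_pos hi]
  have hgQ : ∀ i, s ≤ i → i < s + Q.length → W'.getD i v₀ = Q.getD (i - s) v₀ := by
    intro i h1 h2
    rw [hW', List.getD_eq_getElem?_getD, List.getD_eq_getElem?_getD, List.append_assoc,
      List.getElem?_append_right (by rw [List.length_take]; omega),
      List.length_take]
    have e : min s Wmain.length = s := by omega
    rw [e, List.getElem?_append, if_pos (by omega)]
  have hgB : ∀ i, s + Q.length ≤ i → W'.getD i v₀ = Wmain.getD (i - Q.length) v₀ := by
    intro i h1
    rw [hW', List.getD_eq_getElem?_getD, List.getD_eq_getElem?_getD, List.append_assoc,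
      List.getElem?_append_right (by rw [List.length_take]; omega),
      List.length_take]
    have e : min s Wmain.length = s := by omega
    rw [e, List.getElem?_append_right (by omega), List.getElem?_drop]
    have e2 : s + (i - s - Q.length) = i - Q.length := by omega
    rw [e2]
  -- membership facts
  have hHW : ∀ i, s ≤ i → i < s + k → Wmain.getD i v₀ ∈ H := by
    intro i h1 h2
    have hit : i < Wmain.length := by omega
    rw [List.getD_eq_getElem _ _ hit]
    apply hsub
    have e : ((Wmain.drop s).take k)[i - s]? = some (Wmain[i]'hit) := by
      rw [List.getElem?_take, if_pos (by omega), List.getElem?_drop]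
      have e2 : s + (i - s) = i := by omega
      rw [e2, List.getElem?_eq_getElem hit]
    exact List.mem_of_getElem? e
  have hHQ : ∀ j, j < Q.length → Q.getD j v₀ ∈ H := by
    intro j hj
    have hjt : j < Q.length := by omega
    rw [List.getD_eq_getElem _ _ hjt]
    exact hQ _ (List.getElem_mem hjt)
  -- rewrite the three costs as pair sums
  rw [walkHopCost_eq c k v₀ W', walkHopCost_eq c k v₀ Wmain, walkHopCost_eq c k v₀ Q,
    hlen]
  -- split the new sum into six regions
  have hsplit :
      ∑ p ∈ P k (Wmain.length + Q.length), c (W'.getD p.1 v₀) (W'.getD p.2 v₀) =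
        (∑ p ∈ (P k (Wmain.length + Q.length)).filter (fun p => p.2 < s),
            c (W'.getD p.1 v₀) (W'.getD p.2 v₀))
      + (∑ p ∈ (P k (Wmain.length + Q.length)).filter (fun p => p.1 < s ∧ s ≤ p.2 ∧ p.2 < s + Q.length),
            c (W'.getD p.1 v₀) (W'.getD p.2 v₀))
      + (∑ p ∈ (P k (Wmain.length + Q.length)).filter (fun p => p.1 < s ∧ s + Q.length ≤ p.2),
            c (W'.getD p.1 v₀) (W'.getD p.2 v₀))
      + (∑ p ∈ (P k (Wmain.length + Q.length)).filter (fun p => s ≤ p.1 ∧ p.2 < s + Q.length),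
            c (W'.getD p.1 v₀) (W'.getD p.2 v₀))
      + (∑ p ∈ (P k (Wmain.length + Q.length)).filter (fun p => s ≤ p.1 ∧ p.1 < s + Q.length ∧ s + Q.length ≤ p.2),
            c (W'.getD p.1 v₀) (W'.getD p.2 v₀))
      + (∑ p ∈ (P k (Wmain.length + Q.length)).filter (fun p => s + Q.length ≤ p.1),
            c (W'.getD p.1 v₀) (W'.getD p.2 v₀)) := by
    simp only [Finset.sum_filter]
    rw [← Finset.sum_add_distrib, ← Finset.sum_add_distrib, ← Finset.sum_add_distrib,
      ← Finset.sum_add_distrib, ← Finset.sum_add_distrib]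
    refine Finset.sum_congr rfl fun p hp => ?_
    rw [mem_P] at hp
    split_ifs <;> first | ring1 | (exfalso; omega)
  -- region AA
  have hAA : ∑ p ∈ (P k (Wmain.length + Q.length)).filter (fun p => p.2 < s),
        c (W'.getD p.1 v₀) (W'.getD p.2 v₀)
      = ∑ p ∈ (P k Wmain.length).filter (fun p => p.2 < s),
        c (Wmain.getD p.1 v₀) (Wmain.getD p.2 v₀) := by
    refine Finset.sum_nbij' id id ?_ ?_ (fun a _ => rfl) (fun a _ => rfl) ?_
    · intro p hp; simp only [Finset.mem_filter, mem_P, id_eq] at hp ⊢; omega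
    · intro p hp; simp only [Finset.mem_filter, mem_P, id_eq] at hp ⊢; omega
    · intro p hp
      simp only [Finset.mem_filter, mem_P] at hp
      simp only [id_eq]
      rw [hgA p.1 (by omega), hgA p.2 (by omega)]
  -- region BB
  have hBB : ∑ p ∈ (P k (Wmain.length + Q.length)).filter (fun p => s + Q.length ≤ p.1),
        c (W'.getD p.1 v₀) (W'.getD p.2 v₀)
      = ∑ p ∈ (P k Wmain.length).filter (fun p => s ≤ p.1),
        c (Wmain.getD p.1 v₀) (Wmain.getD p.2 v₀) := by
    refine Finset.sum_nbij' (fun p => (p.1 - Q.length, p.2 - Q.length)) (fun p => (p.1 + Q.length, p.2 + Q.length))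
      ?_ ?_ ?_ ?_ ?_
    · intro p hp; simp only [Finset.mem_filter, mem_P] at hp ⊢; omega
    · intro p hp; simp only [Finset.mem_filter, mem_P] at hp ⊢; omega
    · rintro ⟨a, b⟩ hp
      simp only [Finset.mem_filter, mem_P] at hp
      simp only [Prod.mk.injEq, true_and, and_true]
      omega
    · rintro ⟨a, b⟩ hp
      simp only [Finset.mem_filter, mem_P] at hp
      simp only [Prod.mk.injEq, true_and, and_true]
      omega
    · intro p hp
      simp only [Finset.mem_filter, mem_P] at hp
      rw [hgB p.1 (by omega), hgB p.2 (by omega)]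
  -- region AB
  have hAB : ∑ p ∈ (P k (Wmain.length + Q.length)).filter (fun p => p.1 < s ∧ s + Q.length ≤ p.2),
        c (W'.getD p.1 v₀) (W'.getD p.2 v₀)
      = ∑ p ∈ (P k Wmain.length).filter (fun p => p.1 < s ∧ s ≤ p.2 ∧ p.2 + Q.length ≤ p.1 + k),
        c (Wmain.getD p.1 v₀) (Wmain.getD p.2 v₀) := by
    refine Finset.sum_nbij' (fun p => (p.1, p.2 - Q.length)) (fun p => (p.1, p.2 + Q.length))
      ?_ ?_ ?_ ?_ ?_
    · intro p hp; simp only [Finset.mem_filter, mem_P] at hp ⊢; omega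
    · intro p hp; simp only [Finset.mem_filter, mem_P] at hp ⊢; omega
    · rintro ⟨a, b⟩ hp
      simp only [Finset.mem_filter, mem_P] at hp
      simp only [Prod.mk.injEq, true_and, and_true]
      omega
    · rintro ⟨a, b⟩ hp
      simp only [Finset.mem_filter, mem_P] at hp
      simp only [Prod.mk.injEq, true_and, and_true]
      omega
    · intro p hp
      simp only [Finset.mem_filter, mem_P] at hp
      rw [hgA p.1 (by omega), hgB p.2 (by omega)]
  -- region QQ
  have hQQ : ∑ p ∈ (P k (Wmain.length + Q.length)).filter (fun p => s ≤ p.1 ∧ p.2 < s + Q.length),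
        c (W'.getD p.1 v₀) (W'.getD p.2 v₀)
      = ∑ p ∈ P k Q.length, c (Q.getD p.1 v₀) (Q.getD p.2 v₀) := by
    refine Finset.sum_nbij' (fun p => (p.1 - s, p.2 - s)) (fun p => (p.1 + s, p.2 + s))
      ?_ ?_ ?_ ?_ ?_
    · intro p hp; simp only [Finset.mem_filter, mem_P] at hp ⊢; omega
    · intro p hp; simp only [Finset.mem_filter, mem_P] at hp ⊢; omega
    · rintro ⟨a, b⟩ hp
      simp only [Finset.mem_filter, mem_P] at hp
      simp only [Prod.mk.injEq, true_and, and_true]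
      omega
    · rintro ⟨a, b⟩ hp
      simp only [mem_P] at hp
      simp only [Prod.mk.injEq, true_and, and_true]
      omega
    · intro p hp
      simp only [Finset.mem_filter, mem_P] at hp
      rw [hgQ p.1 (by omega) (by omega), hgQ p.2 (by omega) (by omega)]
  -- region QB : bounded by k^2 * D
  have hQB : ∑ p ∈ (P k (Wmain.length + Q.length)).filter (fun p => s ≤ p.1 ∧ p.1 < s + Q.length ∧ s + Q.length ≤ p.2),
        c (W'.getD p.1 v₀) (W'.getD p.2 v₀) ≤ (k : ℝ) ^ 2 * D := by
    have hcard : ((P k (Wmain.length + Q.length)).filter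
        (fun p => s ≤ p.1 ∧ p.1 < s + Q.length ∧ s + Q.length ≤ p.2)).card ≤ k ^ 2 := by
      have hsub2 : (P k (Wmain.length + Q.length)).filter (fun p => s ≤ p.1 ∧ p.1 < s + Q.length ∧ s + Q.length ≤ p.2)
          ⊆ Finset.Ico (s + Q.length - k) (s + Q.length) ×ˢ Finset.Ico (s + Q.length) (s + Q.length + k) := by
        intro p hp
        simp only [Finset.mem_filter, mem_P] at hp
        simp only [Finset.mem_product, Finset.mem_Ico]
        omega
      have h2 := Finset.card_le_card hsub2
      simp only [Finset.card_product, Nat.card_Ico] at h2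
      have e1 : s + Q.length + k - (s + Q.length) = k := by omega
      rw [e1] at h2
      have e2 : s + Q.length - (s + Q.length - k) ≤ k := by omega
      have h4 := le_trans h2 (Nat.mul_le_mul_right k e2)
      rw [pow_two]
      exact h4
    have hle : ∀ p ∈ (P k (Wmain.length + Q.length)).filter (fun p => s ≤ p.1 ∧ p.1 < s + Q.length ∧ s + Q.length ≤ p.2),
        c (W'.getD p.1 v₀) (W'.getD p.2 v₀) ≤ D := by
      intro p hp
      simp only [Finset.mem_filter, mem_P] at hp
      rw [hgQ p.1 (by omega) (by omega), hgB p.2 (by omega)]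
      exact hH _ (hHQ _ (by omega)) _ (hHW _ (by omega) (by omega))
    calc ∑ p ∈ (P k (Wmain.length + Q.length)).filter (fun p => s ≤ p.1 ∧ p.1 < s + Q.length ∧ s + Q.length ≤ p.2),
          c (W'.getD p.1 v₀) (W'.getD p.2 v₀)
        ≤ ((P k (Wmain.length + Q.length)).filter
            (fun p => s ≤ p.1 ∧ p.1 < s + Q.length ∧ s + Q.length ≤ p.2)).card • D :=
          Finset.sum_le_card_nsmul _ _ _ hle
      _ ≤ (k : ℝ) ^ 2 * D := by
          rw [nsmul_eq_mul]
          have hc : (((P k (Wmain.length + Q.length)).filter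
              (fun p => s ≤ p.1 ∧ p.1 < s + Q.length ∧ s + Q.length ≤ p.2)).card : ℝ) ≤ (k : ℝ) ^ 2 := by
            exact_mod_cast hcard
          exact mul_le_mul_of_nonneg_right hc hD
  -- region AQ : the key bound
  have hAQ : ∑ p ∈ (P k (Wmain.length + Q.length)).filter (fun p => p.1 < s ∧ s ≤ p.2 ∧ p.2 < s + Q.length),
        c (W'.getD p.1 v₀) (W'.getD p.2 v₀)
      ≤ (∑ p ∈ (P k Wmain.length).filter (fun p => p.1 < s ∧ s ≤ p.2 ∧ p.1 + k < p.2 + Q.length),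
          c (Wmain.getD p.1 v₀) (Wmain.getD p.2 v₀)) + (k : ℝ) ^ 2 * D := by
    set N2 := (P k (Wmain.length + Q.length)).filter (fun p => p.1 < s ∧ s ≤ p.2 ∧ p.2 < s + Q.length) with hN2
    set O4 := (P k Wmain.length).filter (fun p => p.1 < s ∧ s ≤ p.2 ∧ p.1 + k < p.2 + Q.length) with hO4
    set φ : ℕ × ℕ → ℕ × ℕ :=
      (fun p => (p.1, p.1 + k - (min (s + Q.length - 1) (p.1 + k) - p.2))) with hφ
    have hmem : ∀ p ∈ N2, φ p ∈ O4 := by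
      intro p hp
      simp only [hN2, hO4, hφ, Finset.mem_filter, mem_P] at hp ⊢
      omega
    have hinj : ∀ x ∈ N2, ∀ y ∈ N2, φ x = φ y → x = y := by
      rintro ⟨a, b⟩ hx ⟨a', b'⟩ hy hxy
      simp only [hN2, Finset.mem_filter, mem_P] at hx hy
      simp only [hφ, Prod.mk.injEq] at hxy ⊢
      omega
    have hterm : ∀ p ∈ N2, c (W'.getD p.1 v₀) (W'.getD p.2 v₀) ≤
        c (Wmain.getD (φ p).1 v₀) (Wmain.getD (φ p).2 v₀) + D := by
      intro p hp
      simp only [hN2, Finset.mem_filter, mem_P] at hp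
      rw [hgA p.1 (by omega), hgQ p.2 (by omega) (by omega)]
      have h1 : (φ p).1 = p.1 := rfl
      have hw : Wmain.getD (φ p).2 v₀ ∈ H := by
        apply hHW
        · simp only [hφ]; omega
        · simp only [hφ]; omega
      have hq2 : Q.getD (p.2 - s) v₀ ∈ H := hHQ _ (by omega)
      calc c (Wmain.getD p.1 v₀) (Q.getD (p.2 - s) v₀)
          ≤ c (Wmain.getD p.1 v₀) (Wmain.getD (φ p).2 v₀)
            + c (Wmain.getD (φ p).2 v₀) (Q.getD (p.2 - s) v₀) := htri _ _ _
        _ ≤ c (Wmain.getD (φ p).1 v₀) (Wmain.getD (φ p).2 v₀) + D := by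
            rw [h1]
            exact add_le_add_right (hH _ hw _ hq2) _
    have hcard : N2.card ≤ k ^ 2 := by
      have hsub2 : N2 ⊆ Finset.Ico (s - k) s ×ˢ Finset.Ico s (s + k) := by
        intro p hp
        simp only [hN2, Finset.mem_filter, mem_P] at hp
        simp only [Finset.mem_product, Finset.mem_Ico]
        omega
      have h2 := Finset.card_le_card hsub2
      simp only [Finset.card_product, Nat.card_Ico] at h2
      have e1 : s + k - s = k := by omega
      rw [e1] at h2
      have e2 : s - (s - k) ≤ k := by omega
      have h4 := le_trans h2 (Nat.mul_le_mul_right k e2)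
      rw [pow_two]
      exact h4
    calc ∑ p ∈ N2, c (W'.getD p.1 v₀) (W'.getD p.2 v₀)
        ≤ ∑ p ∈ N2, (c (Wmain.getD (φ p).1 v₀) (Wmain.getD (φ p).2 v₀) + D) :=
          Finset.sum_le_sum hterm
      _ = ∑ p ∈ N2, c (Wmain.getD (φ p).1 v₀) (Wmain.getD (φ p).2 v₀) + N2.card • D := by
          rw [Finset.sum_add_distrib, Finset.sum_const]
      _ ≤ (∑ p ∈ O4, c (Wmain.getD p.1 v₀) (Wmain.getD p.2 v₀)) + (k : ℝ) ^ 2 * D := by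
          refine add_le_add ?_ ?_
          · have himg : ∑ q ∈ N2.image φ, c (Wmain.getD q.1 v₀) (Wmain.getD q.2 v₀)
                = ∑ p ∈ N2, c (Wmain.getD (φ p).1 v₀) (Wmain.getD (φ p).2 v₀) :=
              Finset.sum_image hinj
            rw [← himg]
            refine Finset.sum_le_sum_of_subset_of_nonneg ?_ (fun p _ _ => hc0 _ _)
            intro q hq
            rw [Finset.mem_image] at hq
            obtain ⟨p, hp, rfl⟩ := hq
            exact hmem p hp
          · rw [nsmul_eq_mul]
            have hc : (N2.card : ℝ) ≤ (k : ℝ) ^ 2 := by exact_mod_cast hcard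
            exact mul_le_mul_of_nonneg_right hc hD
  -- old-walk lower bound
  have hold :
      (∑ p ∈ (P k Wmain.length).filter (fun p => p.2 < s),
          c (Wmain.getD p.1 v₀) (Wmain.getD p.2 v₀))
      + (∑ p ∈ (P k Wmain.length).filter (fun p => s ≤ p.1),
          c (Wmain.getD p.1 v₀) (Wmain.getD p.2 v₀))
      + (∑ p ∈ (P k Wmain.length).filter (fun p => p.1 < s ∧ s ≤ p.2 ∧ p.2 + Q.length ≤ p.1 + k),
          c (Wmain.getD p.1 v₀) (Wmain.getD p.2 v₀))
      + (∑ p ∈ (P k Wmain.length).filter (fun p => p.1 < s ∧ s ≤ p.2 ∧ p.1 + k < p.2 + Q.length),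
          c (Wmain.getD p.1 v₀) (Wmain.getD p.2 v₀))
      ≤ ∑ p ∈ P k Wmain.length, c (Wmain.getD p.1 v₀) (Wmain.getD p.2 v₀) := by
    simp only [Finset.sum_filter]
    rw [← Finset.sum_add_distrib, ← Finset.sum_add_distrib, ← Finset.sum_add_distrib]
    refine Finset.sum_le_sum fun p hp => ?_
    rw [mem_P] at hp
    have hnn := hc0 (Wmain.getD p.1 v₀) (Wmain.getD p.2 v₀)
    split_ifs <;> first | linarith | (exfalso; omega)
  rw [hsplit]
  linarith [hAA, hBB, hAB, hQQ, hQB, hAQ, hold]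

end
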